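/- A finite simple graph G admits a full homomorphism to the graph K1 + K2 (the disjoint union of an isolated vertex and an edge) if and only if G contains no induced subgraph isomorphic to K3, to 2K2 (two disjoint edges), or to P4 (the path on four vertices). -/

import Mathlib

/-- A full homomorphism between simple graphs: for distinct vertices,
adjacency is preserved and reflected. -/
def FullHom {V W : Type} (G : SimpleGraph V) (H : SimpleGraph W) (f : V → W) : Prop :=
  ∀ u v : V, u ≠ v → (G.Adj u v ↔ H.Adj (f u) (f v))

/-- `G` contains an induced copy of `F`. -/
def HasInducedCopy {V W : Type} (F : SimpleGraph V) (G : SimpleGraph W) : Prop :=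
  ∃ f : V ↪ W, ∀ u v : V, F.Adj u v ↔ G.Adj (f u) (f v)

/-- The disjoint union of an isolated vertex and an edge: K1 + K2. -/
def K1K2 : SimpleGraph (Fin 3) := SimpleGraph.fromRel (fun a b => a = 1 ∧ b = 2)

/-- The triangle K3. -/
def K3graph : SimpleGraph (Fin 3) := ⊤

/-- Two disjoint edges: 2K2. -/
def twoK2 : SimpleGraph (Fin 4) :=
  SimpleGraph.fromRel (fun a b => (a = 0 ∧ b = 1) ∨ (a = 2 ∧ b = 3))

/-- The path on four vertices: P4. -/
def P4graph : SimpleGraph (Fin 4) :=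
  SimpleGraph.fromRel (fun a b => (a = 0 ∧ b = 1) ∨ (a = 1 ∧ b = 2) ∨ (a = 2 ∧ b = 3))

lemma k1k2_adj : ∀ x y : Fin 3, K1K2.Adj x y ↔ ((x = 1 ∧ y = 2) ∨ (x = 2 ∧ y = 1)) := by
  simp only [K1K2, SimpleGraph.fromRel_adj]
  decide

lemma no_tri {V : Type} (G : SimpleGraph V) (h : ¬ HasInducedCopy K3graph G)
    (x y z : V) (hxy : G.Adj x y) (hyz : G.Adj y z) (hxz : G.Adj x z) : False := by
  apply h
  have h1 := hxy.ne; have h2 := hyz.ne; have h3 := hxz.ne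
  refine ⟨⟨![x,y,z], ?_⟩, ?_⟩
  · intro i j hij
    fin_cases i <;> fin_cases j <;> simp_all
  · intro u v
    change K3graph.Adj u v ↔ G.Adj (![x,y,z] u) (![x,y,z] v)
    fin_cases u <;> fin_cases v <;>
      simp_all [K3graph, hxy.symm, hyz.symm, hxz.symm]

lemma no_2k2 {V : Type} (G : SimpleGraph V) (h : ¬ HasInducedCopy twoK2 G)
    (x y z w : V) (hxy : G.Adj x y) (hzw : G.Adj z w)
    (hxz : ¬ G.Adj x z) (hxw : ¬ G.Adj x w) (hyz : ¬ G.Adj y z) (hyw : ¬ G.Adj y w)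
    (nxz : x ≠ z) (nxw : x ≠ w) (nyz : y ≠ z) (nyw : y ≠ w) : False := by
  apply h
  have h1 := hxy.ne; have h2 := hzw.ne
  have hxz' : ¬ G.Adj z x := fun hh => hxz hh.symm
  have hxw' : ¬ G.Adj w x := fun hh => hxw hh.symm
  have hyz' : ¬ G.Adj z y := fun hh => hyz hh.symm
  have hyw' : ¬ G.Adj w y := fun hh => hyw hh.symm
  refine ⟨⟨![x,y,z,w], ?_⟩, ?_⟩
  · intro i j hij
    fin_cases i <;> fin_cases j <;> simp_all
  · intro u v
    change twoK2.Adj u v ↔ G.Adj (![x,y,z,w] u) (![x,y,z,w] v)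
    fin_cases u <;> fin_cases v <;>
      simp_all [twoK2, SimpleGraph.fromRel_adj, hxy.symm, hzw.symm]

lemma no_p4 {V : Type} (G : SimpleGraph V) (h : ¬ HasInducedCopy P4graph G)
    (x y z w : V) (hxy : G.Adj x y) (hyz : G.Adj y z) (hzw : G.Adj z w)
    (hxz : ¬ G.Adj x z) (hxw : ¬ G.Adj x w) (hyw : ¬ G.Adj y w)
    (nxz : x ≠ z) (nxw : x ≠ w) (nyw : y ≠ w) : False := by
  apply h
  have h1 := hxy.ne; have h2 := hyz.ne; have h3 := hzw.ne
  have hxz' : ¬ G.Adj z x := fun hh => hxz hh.symm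
  have hxw' : ¬ G.Adj w x := fun hh => hxw hh.symm
  have hyw' : ¬ G.Adj w y := fun hh => hyw hh.symm
  refine ⟨⟨![x,y,z,w], ?_⟩, ?_⟩
  · intro i j hij
    fin_cases i <;> fin_cases j <;> simp_all
  · intro u v
    change P4graph.Adj u v ↔ G.Adj (![x,y,z,w] u) (![x,y,z,w] v)
    fin_cases u <;> fin_cases v <;>
      simp_all [P4graph, SimpleGraph.fromRel_adj, hxy.symm, hyz.symm, hzw.symm]

theorem stmt0 {V : Type} [Fintype V] (G : SimpleGraph V) :
    (∃ f : V → Fin 3, FullHom G K1K2 f) ↔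
      (¬ HasInducedCopy K3graph G ∧ ¬ HasInducedCopy twoK2 G ∧ ¬ HasInducedCopy P4graph G) := by
  constructor
  · rintro ⟨f, hf⟩
    refine ⟨?_, ?_, ?_⟩
    · rintro ⟨e, he⟩
      have n01 : e 0 ≠ e 1 := e.injective.ne (by decide)
      have n12 : e 1 ≠ e 2 := e.injective.ne (by decide)
      have n02 : e 0 ≠ e 2 := e.injective.ne (by decide)
      have a01 := (hf _ _ n01).mp ((he 0 1).mp (by simp [K3graph]))
      have a12 := (hf _ _ n12).mp ((he 1 2).mp (by simp [K3graph]))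
      have a02 := (hf _ _ n02).mp ((he 0 2).mp (by simp [K3graph]))
      rw [k1k2_adj] at a01 a12 a02
      rcases a01 with ⟨p1,p2⟩|⟨p1,p2⟩ <;> rcases a12 with ⟨q1,q2⟩|⟨q1,q2⟩ <;> simp_all
    · rintro ⟨e, he⟩
      have n01 : e 0 ≠ e 1 := e.injective.ne (by decide)
      have n23 : e 2 ≠ e 3 := e.injective.ne (by decide)
      have n02 : e 0 ≠ e 2 := e.injective.ne (by decide)
      have n03 : e 0 ≠ e 3 := e.injective.ne (by decide)
      have a01 := (hf _ _ n01).mp ((he 0 1).mp (by simp [twoK2, SimpleGraph.fromRel_adj]))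
      have a23 := (hf _ _ n23).mp ((he 2 3).mp (by simp [twoK2, SimpleGraph.fromRel_adj]))
      have h02 : ¬ G.Adj (e 0) (e 2) := fun hh => by
        have := (he 0 2).mpr hh; simp [twoK2, SimpleGraph.fromRel_adj] at this
      have h03 : ¬ G.Adj (e 0) (e 3) := fun hh => by
        have := (he 0 3).mpr hh; simp [twoK2, SimpleGraph.fromRel_adj] at this
      rw [k1k2_adj] at a01 a23
      rcases a01 with ⟨p1,p2⟩|⟨p1,p2⟩ <;> rcases a23 with ⟨q1,q2⟩|⟨q1,q2⟩
      · exact h03 ((hf _ _ n03).mpr (by rw [k1k2_adj]; exact Or.inl ⟨p1, q2⟩))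
      · exact h02 ((hf _ _ n02).mpr (by rw [k1k2_adj]; exact Or.inl ⟨p1, q1⟩))
      · exact h02 ((hf _ _ n02).mpr (by rw [k1k2_adj]; exact Or.inr ⟨p1, q1⟩))
      · exact h03 ((hf _ _ n03).mpr (by rw [k1k2_adj]; exact Or.inr ⟨p1, q2⟩))
    · rintro ⟨e, he⟩
      have n01 : e 0 ≠ e 1 := e.injective.ne (by decide)
      have n12 : e 1 ≠ e 2 := e.injective.ne (by decide)
      have n23 : e 2 ≠ e 3 := e.injective.ne (by decide)
      have n03 : e 0 ≠ e 3 := e.injective.ne (by decide)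
      have a01 := (hf _ _ n01).mp ((he 0 1).mp (by simp [P4graph, SimpleGraph.fromRel_adj]))
      have a12 := (hf _ _ n12).mp ((he 1 2).mp (by simp [P4graph, SimpleGraph.fromRel_adj]))
      have a23 := (hf _ _ n23).mp ((he 2 3).mp (by simp [P4graph, SimpleGraph.fromRel_adj]))
      have h03 : ¬ G.Adj (e 0) (e 3) := fun hh => by
        have := (he 0 3).mpr hh; simp [P4graph, SimpleGraph.fromRel_adj] at this
      apply h03
      refine (hf _ _ n03).mpr ?_
      rw [k1k2_adj] at a01 a12 a23 ⊢
      rcases a01 with ⟨p1,p2⟩|⟨p1,p2⟩ <;> rcases a12 with ⟨q1,q2⟩|⟨q1,q2⟩ <;>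
        rcases a23 with ⟨r1,r2⟩|⟨r1,r2⟩ <;> simp_all
  · rintro ⟨h3, h2, h4⟩
    classical
    by_cases hE : ∃ a b, G.Adj a b
    · obtain ⟨a, b, hab⟩ := hE
      -- key0: a vertex adjacent to neither a nor b is isolated
      have key0 : ∀ u, ¬ G.Adj u b → ¬ G.Adj u a → ∀ v, ¬ G.Adj u v := by
        intro u hub hua v huv
        have nua : u ≠ a := fun hh => hub (hh ▸ hab)
        have nub : u ≠ b := fun hh => hua (hh ▸ hab.symm)
        by_cases hvb : G.Adj v b
        · by_cases hva : G.Adj v a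
          · exact no_tri G h3 v a b hva hab hvb
          · -- P4 : u - v - b - a
            have nva : v ≠ a := fun hh => hua (hh ▸ huv)
            exact no_p4 G h4 u v b a huv hvb hab.symm hub hua
              hva nub nua nva
        · by_cases hva : G.Adj v a
          · -- P4 : u - v - a - b
            have nvb : v ≠ b := fun hh => hub (hh ▸ huv)
            exact no_p4 G h4 u v a b huv hva hab hua hub hvb nua nub nvb
          · -- 2K2 : u-v , a-b
            have nva : v ≠ a := fun hh => hvb (hh ▸ hab)
            have nvb : v ≠ b := fun hh => hva (hh ▸ hab.symm)
            exact no_2k2 G h2 u v a b huv hab hua hub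
              hva hvb nua nub nva nvb
      -- key12: u adjacent to b, v adjacent to a but not b ⇒ u adjacent to v
      have key12 : ∀ u v, u ≠ v → G.Adj u b → ¬ G.Adj v b → G.Adj v a → G.Adj u v := by
        intro u v huv hub hvb hva
        by_cases hua : u = a
        · exact hua ▸ hva.symm
        by_cases hvb' : v = b
        · exact hvb' ▸ hub
        by_contra hguv
        have hua' : ¬ G.Adj u a := fun hh => no_tri G h3 u a b hh hab hub
        -- P4 : v - a - b - u
        exact no_p4 G h4 v a b u hva hab hub.symm hvb
          (fun hh => hguv hh.symm) (fun hh => hua' hh.symm)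
          hvb' (Ne.symm huv) (Ne.symm hua)
      refine ⟨fun v => if G.Adj v b then 1 else if G.Adj v a then 2 else 0, ?_⟩
      intro u v huv
      rw [k1k2_adj]
      by_cases hub : G.Adj u b <;> by_cases hvb : G.Adj v b <;> simp only [if_pos, if_neg, hub, hvb, if_true, if_false]
      · -- both type 1
        constructor
        · intro hguv; exact absurd (no_tri G h3 u v b hguv hvb hub) id
        · intro hh; simp at hh
      · by_cases hva : G.Adj v a <;> simp only [hva, if_true, if_false]
        · -- u type 1, v type 2
          constructor
          · intro _; simp
          · intro _; exact key12 u v huv hub hvb hva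
        · -- u type 1, v type 0
          constructor
          · intro hguv; exact absurd (key0 v hvb hva u hguv.symm) (fun hh => hh)
          · intro hh; simp at hh
      · by_cases hua : G.Adj u a <;> simp only [hua, if_true, if_false]
        · -- u type 2, v type 1
          constructor
          · intro _; simp
          · intro _; exact (key12 v u (Ne.symm huv) hvb hub hua).symm
        · -- u type 0, v type 1
          constructor
          · intro hguv; exact absurd (key0 u hub hua v hguv) (fun hh => hh)
          · intro hh; simp at hh
      · by_cases hua : G.Adj u a <;> by_cases hva : G.Adj v a <;>
          simp only [hua, hva, if_true, if_false]
        · -- both type 2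
          constructor
          · intro hguv; exact absurd (no_tri G h3 u v a hguv hva hua) id
          · intro hh; simp at hh
        · -- u type 2, v type 0
          constructor
          · intro hguv; exact absurd (key0 v hvb hva u hguv.symm) (fun hh => hh)
          · intro hh; simp at hh
        · -- u type 0, v type 2
          constructor
          · intro hguv; exact absurd (key0 u hub hua v hguv) (fun hh => hh)
          · intro hh; simp at hh
        · -- both type 0
          constructor
          · intro hguv; exact absurd (key0 u hub hua v hguv) (fun hh => hh)
          · intro hh; simp at hh
    · push_neg at hE
      refine ⟨fun _ => 0, ?_⟩
      intro u v _
      rw [k1k2_adj]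
      constructor
      · intro hguv; exact absurd hguv (hE u v)
      · intro hh; simp at hh
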